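/- Let g₁,g₂:[0,∞)→[0,∞) be increasing continuous bijections with g₁(1)=g₂(1)=1, each satisfying the two-sided regularity condition: c·(y/x)^α ≤ g_i(y)/g_i(x) ≤ d·(y/x)^β for all y ≥ x ≥ 1, where c,d>0 and 0<α≤β<1. Set w_i(t)=min(1, 1/g_i⁻¹(t)) for t>0. Then there exist constants C₁,C₂>0 depending only on c,d,α,β such that for all integers n ≥ 1: C₁·S_n ≤ ∫_0^∞ ∫_0^∞ min( n·w₁(s), n·w₂(t), n²·w₁(s)·w₂(t) ) ds dt ≤ C₂·S_n, where S_n = g₁(n)·g₂(n) + n·∫_1^{g₁(n)} g₂(g₁⁻¹(s))/g₁⁻¹(s) ds + n·∫_1^{g₂(n)} g₁(g₂⁻¹(t))/g₂⁻¹(t) dt. -/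

import Mathlib

open MeasureTheory Set

namespace Stmt19

structure RegFun (c d α β : ℝ) where
  g : ℝ → ℝ
  ginv : ℝ → ℝ
  mono : StrictMonoOn g (Ici 0)
  cont : ContinuousOn g (Ici 0)
  bij : BijOn g (Ici 0) (Ici 0)
  g_one : g 1 = 1
  linv : ∀ x ∈ Ici (0:ℝ), ginv (g x) = x
  rinv : ∀ y ∈ Ici (0:ℝ), ginv y ∈ Ici (0:ℝ) ∧ g (ginv y) = y
  reg : ∀ x y : ℝ, 1 ≤ x → x ≤ y →
    c * (y / x) ^ α ≤ g y / g x ∧ g y / g x ≤ d * (y / x) ^ β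

noncomputable def Kc (c α : ℝ) : ℝ := max 2 ((2/c) ^ (1/α))

noncomputable def Cb (d β : ℝ) : ℝ := d ^ (1/β) / (1/β - 1)

lemma Kc_ge_two (c α : ℝ) : (2:ℝ) ≤ Kc c α := le_max_left _ _

lemma Kc_pos (c α : ℝ) : (0:ℝ) < Kc c α := lt_of_lt_of_le two_pos (Kc_ge_two c α)

lemma neg_exp_lt {α β : ℝ} (hα : 0 < α) (hαβ : α ≤ β) (hβ : β < 1) : -(1/β) < -1 := by
  have hβ0 : 0 < β := lt_of_lt_of_le hα hαβ
  have : 1 < 1/β := by rw [lt_div_iff₀ hβ0]; linarith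
  linarith

lemma integral_Ioi_split {f : ℝ → ℝ} {X : ℝ} (hX : 0 ≤ X)
    (hf : MeasureTheory.IntegrableOn f (Ioi 0)) :
    ∫ t in Ioi (0:ℝ), f t = (∫ t in Ioc 0 X, f t) + ∫ t in Ioi X, f t := by
  rw [← MeasureTheory.setIntegral_union (Ioc_disjoint_Ioi le_rfl) measurableSet_Ioi
    (hf.mono_set Ioc_subset_Ioi_self) (hf.mono_set (Ioi_subset_Ioi hX)),
    Ioc_union_Ioi_eq_Ioi hX]

lemma Cb_pos {d β : ℝ} (hd : 0 < d) (hα0 : 0 < β) (hβ : β < 1) : 0 < Cb d β := by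
  have h1 : 1 < 1/β := by rw [lt_div_iff₀ hα0]; linarith
  have : (0:ℝ) < d ^ (1/β) := Real.rpow_pos_of_pos hd _
  apply div_pos this; linarith

variable {c d α β : ℝ}

namespace RegFun

variable (R : RegFun c d α β)

/-- monotone extension of the inverse -/
noncomputable def h (t : ℝ) : ℝ := R.ginv (max t 0)

lemma g_nonneg {x : ℝ} (hx : 0 ≤ x) : 0 ≤ R.g x := R.bij.mapsTo hx

lemma g_zero : R.g 0 = 0 := by
  obtain ⟨x, hx, hgx⟩ := R.bij.surjOn (mem_Ici.2 le_rfl)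
  rcases eq_or_lt_of_le (mem_Ici.1 hx) with h | h
  · rw [← h] at hgx; exact hgx.symm ▸ hgx
  · exfalso
    have := R.mono (mem_Ici.2 le_rfl) (mem_Ici.2 h.le) h
    rw [hgx] at this
    exact absurd this (not_lt.2 (R.g_nonneg le_rfl))

lemma g_monoOn : MonotoneOn R.g (Ici 0) := R.mono.monotoneOn

lemma g_ge_one {x : ℝ} (hx : 1 ≤ x) : 1 ≤ R.g x := by
  have := R.g_monoOn (by norm_num : (1:ℝ) ∈ Ici 0) (le_trans zero_le_one hx) hx
  rwa [R.g_one] at this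

lemma g_pos {x : ℝ} (hx : 1 ≤ x) : 0 < R.g x := lt_of_lt_of_le one_pos (R.g_ge_one hx)

lemma h_nonneg (t : ℝ) : 0 ≤ R.h t := (R.rinv _ (mem_Ici.2 (le_max_right _ _))).1

lemma g_h {t : ℝ} (ht : 0 ≤ t) : R.g (R.h t) = t := by
  have := (R.rinv t ht).2
  rwa [h, max_eq_left ht]

lemma h_g {x : ℝ} (hx : 0 ≤ x) : R.h (R.g x) = x := by
  rw [h, max_eq_left (R.g_nonneg hx)]; exact R.linv x hx

lemma h_of_pos {t : ℝ} (ht : 0 < t) : R.h t = R.ginv t := by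
  rw [h, max_eq_left ht.le]

lemma h_mono : Monotone R.h := by
  intro t t' htt'
  by_contra hlt
  push_neg at hlt
  have h1 : R.g (R.h t') < R.g (R.h t) :=
    R.mono (R.h_nonneg t') (R.h_nonneg t) hlt
  have e1 : R.g (R.h t) = max t 0 := (R.rinv _ (le_max_right t 0)).2
  have e2 : R.g (R.h t') = max t' 0 := (R.rinv _ (le_max_right t' 0)).2
  rw [e1, e2] at h1
  exact absurd (max_le_max htt' (le_refl 0)) (not_le.2 h1)

lemma h_one : R.h 1 = 1 := by
  have := R.h_g (zero_le_one (α := ℝ))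
  rwa [R.g_one] at this

lemma h_ge_one {t : ℝ} (ht : 1 ≤ t) : 1 ≤ R.h t := by
  have := R.h_mono ht; rwa [R.h_one] at this

lemma h_le_one {t : ℝ} (ht : t ≤ 1) : R.h t ≤ 1 := by
  have := R.h_mono ht; rwa [R.h_one] at this

lemma h_pos {t : ℝ} (ht : 0 < t) : 0 < R.h t := by
  rcases eq_or_lt_of_le (R.h_nonneg t) with h0 | h0
  · exfalso
    have := R.g_h ht.le
    rw [← h0, R.g_zero] at this
    exact absurd this.symm ht.ne'
  · exact h0

lemma h_le_iff {t x : ℝ} (ht : 0 ≤ t) (hx : 0 ≤ x) : R.h t ≤ x ↔ t ≤ R.g x := by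
  constructor
  · intro hh
    have := R.g_monoOn (R.h_nonneg t) hx hh
    rwa [R.g_h ht] at this
  · intro hg
    have := R.h_mono hg
    rwa [R.h_g hx] at this


section Reg

variable (hc : 0 < c) (hd : 0 < d) (hα : 0 < α) (hαβ : α ≤ β) (hβ : β < 1)

lemma reg_low {x y : ℝ} (hx : 1 ≤ x) (hxy : x ≤ y) :
    c * (y / x) ^ α * R.g x ≤ R.g y := by
  have h := (R.reg x y hx hxy).1
  have hgx : 0 < R.g x := R.g_pos hx
  calc c * (y/x)^α * R.g x ≤ R.g y / R.g x * R.g x :=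
        mul_le_mul_of_nonneg_right h hgx.le
    _ = R.g y := by field_simp

lemma reg_high {x y : ℝ} (hx : 1 ≤ x) (hxy : x ≤ y) :
    R.g y ≤ d * (y / x) ^ β * R.g x := by
  have h := (R.reg x y hx hxy).2
  have hgx : 0 < R.g x := R.g_pos hx
  calc R.g y = R.g y / R.g x * R.g x := by field_simp
    _ ≤ d * (y/x)^β * R.g x := mul_le_mul_of_nonneg_right h hgx.le

include hc hα in
lemma h_le_pow {t : ℝ} (ht : 1 ≤ t) : R.h t ≤ (t / c) ^ (1/α) := by
  have hht : 1 ≤ R.h t := R.h_ge_one ht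
  have h1 := (R.reg 1 (R.h t) le_rfl hht).1
  rw [R.g_one, R.g_h (by linarith : (0:ℝ) ≤ t), div_one, div_one] at h1
  have h2 : (R.h t) ^ α ≤ t / c := by
    rw [le_div_iff₀ hc, mul_comm]; exact h1
  have h3 : ((R.h t) ^ α) ^ (1/α) ≤ (t/c) ^ (1/α) :=
    Real.rpow_le_rpow (Real.rpow_nonneg (by linarith) _) h2 (by positivity)
  rwa [← Real.rpow_mul (by linarith : (0:ℝ) ≤ R.h t), mul_one_div,
    div_self hα.ne', Real.rpow_one] at h3

include hd hα hαβ hβ in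
lemma h_ge_pow {t : ℝ} (ht : 1 ≤ t) : (t / d) ^ (1/β) ≤ R.h t := by
  have hβ0 : 0 < β := lt_of_lt_of_le hα hαβ
  have hht : 1 ≤ R.h t := R.h_ge_one ht
  have h1 := (R.reg 1 (R.h t) le_rfl hht).2
  rw [R.g_one, R.g_h (by linarith : (0:ℝ) ≤ t), div_one, div_one] at h1
  have h2 : t / d ≤ (R.h t) ^ β := by
    rw [div_le_iff₀ hd, mul_comm]; exact h1
  have h3 : (t/d) ^ (1/β) ≤ ((R.h t) ^ β) ^ (1/β) :=
    Real.rpow_le_rpow (by positivity) h2 (by positivity)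
  rwa [← Real.rpow_mul (by linarith : (0:ℝ) ≤ R.h t), mul_one_div,
    div_self hβ0.ne', Real.rpow_one] at h3

include hd hα hαβ in
lemma inv_h_le {x t : ℝ} (hx : 1 ≤ x) (ht : R.g x < t) :
    1 / R.h t ≤ (d * R.g x) ^ (1/β) / x * t ^ (-(1/β)) := by
  have hβ0 : 0 < β := lt_of_lt_of_le hα hαβ
  have hgx : 0 < R.g x := R.g_pos hx
  have ht1 : (1:ℝ) ≤ t := le_trans (R.g_ge_one hx) ht.le
  have ht0 : (0:ℝ) < t := by linarith
  set u := R.h t with hu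
  have hxu : x ≤ u := by
    have := R.h_mono ht.le
    rwa [R.h_g (by linarith : (0:ℝ) ≤ x)] at this
  have hu1 : 1 ≤ u := le_trans hx hxu
  have h1 := (R.reg x u hx hxu).2
  rw [R.g_h ht0.le] at h1
  have h2 : t / (d * R.g x) ≤ (u/x) ^ β := by
    rw [div_le_iff₀ (by positivity)]
    calc t = t / R.g x * R.g x := by field_simp
      _ ≤ d * (u/x)^β * R.g x := mul_le_mul_of_nonneg_right h1 hgx.le
      _ = (u/x)^β * (d * R.g x) := by ring
  have h3 : (t / (d * R.g x)) ^ (1/β) ≤ ((u/x) ^ β) ^ (1/β) :=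
    Real.rpow_le_rpow (by positivity) h2 (by positivity)
  rw [← Real.rpow_mul (by positivity : (0:ℝ) ≤ u/x), mul_one_div,
    div_self hβ0.ne', Real.rpow_one] at h3
  have h4 : x * (t / (d * R.g x)) ^ (1/β) ≤ u := by
    rw [← le_div_iff₀' (by positivity)]; exact h3
  have hu0 : 0 < u := R.h_pos ht0
  have h5 : 1 / u ≤ 1 / (x * (t / (d * R.g x)) ^ (1/β)) := by
    apply one_div_le_one_div_of_le _ h4
    positivity
  refine h5.trans (le_of_eq ?_)
  rw [Real.div_rpow ht0.le (by positivity), Real.rpow_neg ht0.le]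
  have hA : (0:ℝ) < t ^ (1/β) := Real.rpow_pos_of_pos ht0 _
  have hB : (0:ℝ) < (d * R.g x) ^ (1/β) := Real.rpow_pos_of_pos (by positivity) _
  field_simp

end Reg

section Tail

variable (hc : 0 < c) (hd : 0 < d) (hα : 0 < α) (hαβ : α ≤ β) (hβ : β < 1)

lemma h_meas : Measurable R.h := R.h_mono.measurable

lemma inv_h_meas : Measurable (fun t => 1 / R.h t) := by
  exact measurable_const.div R.h_meas

include hd hα hαβ hβ in
lemma tail_integrable {x : ℝ} (hx : 1 ≤ x) :
    IntegrableOn (fun t => 1 / R.h t) (Ioi (R.g x)) := by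
  have hM : IntegrableOn (fun t => (d * R.g x) ^ (1/β) / x * t ^ (-(1/β)))
      (Ioi (R.g x)) :=
    (integrableOn_Ioi_rpow_of_lt (neg_exp_lt hα hαβ hβ) (R.g_pos hx)).const_mul _
  apply Integrable.mono' hM (R.inv_h_meas.aestronglyMeasurable)
  rw [ae_restrict_iff' measurableSet_Ioi]
  refine Filter.Eventually.of_forall fun t ht => ?_
  rw [Real.norm_eq_abs, abs_of_nonneg (one_div_nonneg.2 (R.h_nonneg t))]
  exact R.inv_h_le hd hα hαβ hx ht

include hd hα hαβ hβ in
lemma tail_le {x : ℝ} (hx : 1 ≤ x) :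
    ∫ t in Ioi (R.g x), 1 / R.h t ≤ Cb d β * (R.g x / x) := by
  have hβ0 : 0 < β := lt_of_lt_of_le hα hαβ
  have hb1 : 1 < 1/β := by rw [lt_div_iff₀ hβ0]; linarith
  have hgx : 0 < R.g x := R.g_pos hx
  have hx0 : 0 < x := lt_of_lt_of_le one_pos hx
  have hM : IntegrableOn (fun t => (d * R.g x) ^ (1/β) / x * t ^ (-(1/β)))
      (Ioi (R.g x)) :=
    (integrableOn_Ioi_rpow_of_lt (neg_exp_lt hα hαβ hβ) hgx).const_mul _
  have step1 : ∫ t in Ioi (R.g x), 1 / R.h t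
      ≤ ∫ t in Ioi (R.g x), (d * R.g x) ^ (1/β) / x * t ^ (-(1/β)) := by
    refine setIntegral_mono_on (R.tail_integrable hd hα hαβ hβ hx) hM
      measurableSet_Ioi fun t ht => ?_
    exact R.inv_h_le hd hα hαβ hx ht
  have e1 : ∫ t in Ioi (R.g x), t ^ (-(1/β)) = (R.g x) ^ (1 - 1/β) / (1/β - 1) := by
    rw [integral_Ioi_rpow_of_lt (neg_exp_lt hα hαβ hβ) hgx]
    rw [show -(1/β) + 1 = 1 - 1/β by ring]
    rw [div_eq_div_iff (by linarith) (by linarith)]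
    ring
  have e2 : (R.g x) ^ ((1:ℝ)/β) * (R.g x) ^ (1 - 1/β) = R.g x := by
    rw [← Real.rpow_add hgx, show (1:ℝ)/β + (1 - 1/β) = 1 by ring, Real.rpow_one]
  calc ∫ t in Ioi (R.g x), 1 / R.h t
      ≤ ∫ t in Ioi (R.g x), (d * R.g x) ^ (1/β) / x * t ^ (-(1/β)) := step1
    _ = (d * R.g x) ^ (1/β) / x * ((R.g x) ^ (1 - 1/β) / (1/β - 1)) := by
        rw [MeasureTheory.integral_const_mul, e1]
    _ = Cb d β * (R.g x / x) := by
        rw [Real.mul_rpow hd.le hgx.le, Cb, div_mul_div_comm, mul_assoc, e2]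
        field_simp

include hc hα in
lemma grow {x : ℝ} (hx : 1 ≤ x) : 2 * R.g x ≤ R.g (Kc c α * x) := by
  have hx0 : 0 < x := lt_of_lt_of_le one_pos hx
  have hK2 : (2:ℝ) ≤ Kc c α := Kc_ge_two c α
  have hxK : x ≤ Kc c α * x := by nlinarith
  have h1 := R.reg_low hx hxK
  rw [show Kc c α * x / x = Kc c α by field_simp] at h1
  have hKα : (2:ℝ)/c ≤ (Kc c α) ^ α := by
    have := Real.rpow_le_rpow (Real.rpow_nonneg (by positivity) _)
      (le_max_right 2 ((2/c) ^ (1/α))) hα.le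
    rwa [← Real.rpow_mul (by positivity : (0:ℝ) ≤ 2/c), one_div_mul_cancel hα.ne',
      Real.rpow_one] at this
  have h2 : 2 ≤ c * (Kc c α) ^ α := by
    calc (2:ℝ) = c * (2/c) := by field_simp
      _ ≤ c * (Kc c α) ^ α := mul_le_mul_of_nonneg_left hKα hc.le
  calc 2 * R.g x ≤ c * (Kc c α) ^ α * R.g x := by
        apply mul_le_mul_of_nonneg_right h2 (R.g_nonneg (by linarith))
    _ ≤ R.g (Kc c α * x) := h1

include hc hd hα hαβ hβ in
lemma tail_ge {x : ℝ} (hx : 1 ≤ x) :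
    R.g x / (Kc c α * x) ≤ ∫ t in Ioi (R.g x), 1 / R.h t := by
  have hx0 : 0 < x := lt_of_lt_of_le one_pos hx
  have hK : 0 < Kc c α := Kc_pos c α
  have hK2 : (2:ℝ) ≤ Kc c α := Kc_ge_two c α
  set X := R.g x with hX
  set Y := R.g (Kc c α * x) with hY
  have hX1 : 1 ≤ X := R.g_ge_one hx
  have h2XY : 2 * X ≤ Y := R.grow hc hα hx
  have hXY : X ≤ Y := by linarith
  have hKx1 : 1 ≤ Kc c α * x := by nlinarith
  have hhY : R.h Y = Kc c α * x := R.h_g (by positivity)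
  have hint : IntegrableOn (fun t => 1 / R.h t) (Ioc X Y) :=
    (R.tail_integrable hd hα hαβ hβ hx).mono_set Ioc_subset_Ioi_self
  have step1 : ∫ t in Ioc X Y, (1 / (Kc c α * x)) ≤ ∫ t in Ioc X Y, 1 / R.h t := by
    refine setIntegral_mono_on (integrableOn_const measure_Ioc_lt_top.ne) hint
      measurableSet_Ioc fun t ht => ?_
    have ht0 : 0 < t := lt_of_le_of_lt (by linarith : (0:ℝ) ≤ X) ht.1
    have hht : R.h t ≤ Kc c α * x := by
      have := R.h_mono ht.2; rwa [hhY] at this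
    exact one_div_le_one_div_of_le (R.h_pos ht0) hht
  have step0 : X / (Kc c α * x) ≤ ∫ t in Ioc X Y, (1 / (Kc c α * x)) := by
    rw [setIntegral_const, Real.volume_real_Ioc, max_eq_left (by linarith)]
    rw [smul_eq_mul, div_eq_mul_one_div]
    apply mul_le_mul_of_nonneg_right (by linarith) (by positivity)
  have step2 : ∫ t in Ioc X Y, 1 / R.h t ≤ ∫ t in Ioi X, 1 / R.h t := by
    apply setIntegral_mono_set (R.tail_integrable hd hα hαβ hβ hx)
    · exact Filter.Eventually.of_forall fun t => one_div_nonneg.2 (R.h_nonneg t)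
    · exact HasSubset.Subset.eventuallyLE Ioc_subset_Ioi_self
  linarith

end Tail

section Weight

variable (hc : 0 < c) (hd : 0 < d) (hα : 0 < α) (hαβ : α ≤ β) (hβ : β < 1)

/-- the weight `n·min(1, 1/g⁻¹(s))`, in a globally defined form -/
noncomputable def A (R : RegFun c d α β) (n : ℕ) (s : ℝ) : ℝ := (n:ℝ) * min 1 (1 / R.h s)

lemma A_nonneg (n : ℕ) (s : ℝ) : 0 ≤ R.A n s :=
  mul_nonneg (Nat.cast_nonneg n) (le_min zero_le_one (one_div_nonneg.2 (R.h_nonneg s)))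

lemma A_meas (n : ℕ) : Measurable (R.A n) := by
  apply Measurable.const_mul
  exact (measurable_const.min ((measurable_const (a := (1:ℝ))).div R.h_meas))

lemma A_eq {n : ℕ} {s : ℝ} (hs : 0 < s) : R.A n s = (n:ℝ) / max 1 (R.h s) := by
  have hh : 0 < R.h s := R.h_pos hs
  rw [A]
  rcases le_total (R.h s) 1 with h1 | h1
  · rw [max_eq_left h1, min_eq_left (by rw [le_div_iff₀ hh]; linarith)]
    simp
  · rw [max_eq_right h1, min_eq_right (by rw [div_le_one hh]; linarith)]
    rw [mul_one_div]

lemma A_le (n : ℕ) (s : ℝ) : R.A n s ≤ (n:ℝ) := by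
  rw [A]
  calc (n:ℝ) * min 1 (1 / R.h s) ≤ (n:ℝ) * 1 :=
        mul_le_mul_of_nonneg_left (min_le_left _ _) (Nat.cast_nonneg n)
    _ = (n:ℝ) := mul_one _

lemma A_eq_one_div {n : ℕ} {s : ℝ} (hs : 1 < s) : R.A n s = (n:ℝ) * (1 / R.h s) := by
  have h1 : 1 ≤ R.h s := R.h_ge_one hs.le
  rw [A, min_eq_right (by rw [div_le_one (by linarith : (0:ℝ) < R.h s)]; linarith)]

include hd hα hαβ hβ in
lemma A_int (n : ℕ) : IntegrableOn (R.A n) (Ioi 0) := by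
  rw [← Ioc_union_Ioi_eq_Ioi (zero_le_one (α := ℝ))]
  apply IntegrableOn.union
  · apply Measure.integrableOn_of_bounded (M := (n:ℝ))
    · rw [Real.volume_Ioc]; exact ENNReal.ofReal_ne_top
    · exact (R.A_meas n).aestronglyMeasurable
    · refine Filter.Eventually.of_forall fun s => ?_
      rw [Real.norm_eq_abs, abs_of_nonneg (R.A_nonneg n s)]
      exact R.A_le n s
  · have h1 : IntegrableOn (fun s => (n:ℝ) * (1 / R.h s)) (Ioi 1) := by
      have := (R.tail_integrable hd hα hαβ hβ (le_refl 1)).const_mul (n:ℝ)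
      rwa [R.g_one] at this
    apply Integrable.mono' h1 ((R.A_meas n).aestronglyMeasurable)
    rw [ae_restrict_iff' measurableSet_Ioi]
    refine Filter.Eventually.of_forall fun s hs => ?_
    rw [Real.norm_eq_abs, abs_of_nonneg (R.A_nonneg n s), R.A_eq_one_div hs]

end Weight

section Slice

variable (hc : 0 < c) (hd : 0 < d) (hα : 0 < α) (hαβ : α ≤ β) (hβ : β < 1)

include hd hα hαβ hβ in
lemma slice (R' : RegFun c d α β) (n : ℕ) (hn : 1 ≤ n) {s : ℝ} (hs : 0 < s) :
    R.A n s * R'.g (min (max 1 (R.h s)) n)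
        ≤ (∫ t in Ioi (0:ℝ), min (R.A n s) (min (R'.A n t) (R.A n s * R'.A n t)))
    ∧ (∫ t in Ioi (0:ℝ), min (R.A n s) (min (R'.A n t) (R.A n s * R'.A n t)))
        ≤ (1 + Cb d β) * (R.A n s * R'.g (min (max 1 (R.h s)) n)) := by
  have hn1 : (1:ℝ) ≤ (n:ℝ) := by exact_mod_cast hn
  set u := max 1 (R.h s) with hu
  set v := min u (n:ℝ) with hv
  have hu1 : (1:ℝ) ≤ u := le_max_left _ _
  have hv1 : (1:ℝ) ≤ v := le_min hu1 hn1
  have hv0 : (0:ℝ) < v := by linarith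
  have hvn : v ≤ (n:ℝ) := min_le_right _ _
  have hvu : v ≤ u := min_le_left _ _
  have ha : R.A n s = (n:ℝ) / u := R.A_eq hs
  set a := R.A n s with haa
  have ha0 : 0 < a := by rw [ha]; positivity
  set X := R'.g v with hX
  have hX1 : (1:ℝ) ≤ X := R'.g_ge_one hv1
  have hX0 : (0:ℝ) < X := by linarith
  have hhX : R'.h X = v := R'.h_g (by linarith)
  have key : min 1 a * ((n:ℝ) / v) = a := by
    rcases le_total u (n:ℝ) with h | h
    · have hveq : v = u := min_eq_left h
      have ha1 : 1 ≤ a := by rw [ha, le_div_iff₀ (by linarith)]; linarith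
      rw [min_eq_left ha1, hveq, one_mul, ha]
    · have hveq : v = (n:ℝ) := min_eq_right h
      have ha1 : a ≤ 1 := by rw [ha, div_le_one (by linarith)]; exact h
      rw [min_eq_right ha1, hveq, div_self (by linarith : (n:ℝ) ≠ 0), mul_one]
  set F := fun t => min a (min (R'.A n t) (a * R'.A n t)) with hF
  have hFnn : ∀ t, 0 ≤ F t := fun t =>
    le_min ha0.le (le_min (R'.A_nonneg n t) (mul_nonneg ha0.le (R'.A_nonneg n t)))
  have hFle : ∀ t, F t ≤ R'.A n t := fun t =>
    le_trans (min_le_right _ _) (min_le_left _ _)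
  have hFm : Measurable F :=
    measurable_const.min ((R'.A_meas n).min ((R'.A_meas n).const_mul a))
  have hFint : IntegrableOn F (Ioi (0:ℝ)) := by
    apply Integrable.mono' (R'.A_int hd hα hαβ hβ n) hFm.aestronglyMeasurable
    refine Filter.Eventually.of_forall fun t => ?_
    rw [Real.norm_eq_abs, abs_of_nonneg (hFnn t)]
    exact hFle t
  have hsplit : (∫ t in Ioi (0:ℝ), F t) = (∫ t in Ioc 0 X, F t) + ∫ t in Ioi X, F t :=
    integral_Ioi_split hX0.le hFint
  have piece1 : (∫ t in Ioc (0:ℝ) X, F t) = a * X := by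
    have hcongr : EqOn F (fun _ => a) (Ioc (0:ℝ) X) := by
      intro t ht
      have hht : R'.h t ≤ v := by
        have := R'.h_mono ht.2; rwa [hhX] at this
      have hmax : max 1 (R'.h t) ≤ v := max_le hv1 hht
      have hB : R'.A n t = (n:ℝ) / max 1 (R'.h t) := R'.A_eq ht.1
      have hmax0 : (0:ℝ) < max 1 (R'.h t) := by
        have := le_max_left (1:ℝ) (R'.h t); linarith
      have hBv : (n:ℝ) / v ≤ R'.A n t := by
        rw [hB]; exact div_le_div_of_nonneg_left (by linarith) hmax0 hmax
      have hB1 : (1:ℝ) ≤ R'.A n t := by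
        have h1 : (1:ℝ) ≤ (n:ℝ) / v := by rw [le_div_iff₀ hv0]; linarith
        linarith
      have hBa : a ≤ R'.A n t := by
        have : (n:ℝ)/u ≤ (n:ℝ)/v := div_le_div_of_nonneg_left (by linarith) hv0 hvu
        rw [ha]; linarith
      have haB : a ≤ a * R'.A n t := le_mul_of_one_le_right ha0.le hB1
      simp only [hF]
      rw [min_eq_left (le_min hBa haB)]
    rw [setIntegral_congr_fun measurableSet_Ioc hcongr, setIntegral_const,
      Real.volume_real_Ioc, max_eq_left (by linarith), smul_eq_mul, sub_zero,
      mul_comm]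
  have piece2nn : 0 ≤ ∫ t in Ioi X, F t :=
    setIntegral_nonneg measurableSet_Ioi fun t _ => hFnn t
  have piece2ub : (∫ t in Ioi X, F t) ≤ Cb d β * (a * X) := by
    have hmaj : ∀ t ∈ Ioi X, F t ≤ min 1 a * ((n:ℝ) * (1 / R'.h t)) := by
      intro t ht
      have ht1 : (1:ℝ) < t := lt_of_le_of_lt hX1 ht
      have hA' : R'.A n t = (n:ℝ) * (1 / R'.h t) := R'.A_eq_one_div ht1
      have hmin : min (R'.A n t) (a * R'.A n t) = min 1 a * R'.A n t := by
        rcases le_total (1:ℝ) a with h | h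
        · rw [min_eq_left h, one_mul,
            min_eq_left (le_mul_of_one_le_left (R'.A_nonneg n t) h)]
        · rw [min_eq_right h,
            min_eq_right (mul_le_of_le_one_left (R'.A_nonneg n t) h)]
      calc F t ≤ min (R'.A n t) (a * R'.A n t) := min_le_right _ _
        _ = min 1 a * R'.A n t := hmin
        _ = min 1 a * ((n:ℝ) * (1 / R'.h t)) := by rw [hA']
    have hintmaj : IntegrableOn (fun t => min 1 a * ((n:ℝ) * (1 / R'.h t))) (Ioi X) := by
      have h0 : IntegrableOn (fun t => 1 / R'.h t) (Ioi X) := by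
        have := R'.tail_integrable hd hα hαβ hβ hv1
        rwa [← hX] at this
      exact (h0.const_mul _).const_mul _
    calc (∫ t in Ioi X, F t)
        ≤ ∫ t in Ioi X, min 1 a * ((n:ℝ) * (1 / R'.h t)) :=
          setIntegral_mono_on (hFint.mono_set (Ioi_subset_Ioi hX0.le)) hintmaj
            measurableSet_Ioi hmaj
      _ = min 1 a * ((n:ℝ) * ∫ t in Ioi X, 1 / R'.h t) := by
          rw [MeasureTheory.integral_const_mul, MeasureTheory.integral_const_mul]
      _ ≤ min 1 a * ((n:ℝ) * (Cb d β * (X / v))) := by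
          have htail : (∫ t in Ioi X, 1 / R'.h t) ≤ Cb d β * (X / v) := by
            have := R'.tail_le hd hα hαβ hβ hv1
            rwa [← hX] at this
          have hm0 : 0 ≤ min 1 a := le_min zero_le_one ha0.le
          have hn0 : (0:ℝ) ≤ (n:ℝ) := Nat.cast_nonneg n
          apply mul_le_mul_of_nonneg_left _ hm0
          exact mul_le_mul_of_nonneg_left htail hn0
      _ = Cb d β * (a * X) := by
          have : min 1 a * ((n:ℝ) * (Cb d β * (X / v)))
              = Cb d β * ((min 1 a * ((n:ℝ) / v)) * X) := by ring
          rw [this, key]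
  constructor
  · rw [hsplit, piece1]; linarith
  · rw [hsplit, piece1]
    have hCb : 0 < Cb d β := Cb_pos hd (lt_of_lt_of_le hα hαβ) hβ
    nlinarith [mul_pos ha0 hX0]


lemma gc_cont : Continuous (fun x => R.g (max x 0)) :=
  R.cont.comp_continuous (continuous_id.max continuous_const) fun x => le_max_right x 0

include hc hd hα hαβ hβ in
lemma core (R' : RegFun c d α β) (n : ℕ) (hn : 1 ≤ n)
    (hJint : IntegrableOn
      (fun s => ∫ t in Ioi (0:ℝ), min (R.A n s) (min (R'.A n t) (R.A n s * R'.A n t)))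
      (Ioi (0:ℝ))) :
    (R.g n * R'.g n + n + (n:ℝ) * ∫ s in Ioc (1:ℝ) (R.g n), R'.g (R.h s) / R.h s) / Kc c α
      ≤ (∫ s in Ioi (0:ℝ), ∫ t in Ioi (0:ℝ),
          min (R.A n s) (min (R'.A n t) (R.A n s * R'.A n t)))
    ∧ (∫ s in Ioi (0:ℝ), ∫ t in Ioi (0:ℝ),
          min (R.A n s) (min (R'.A n t) (R.A n s * R'.A n t)))
      ≤ ((1 + Cb d β) * (1 + Cb d β))
        * (R.g n * R'.g n + n + (n:ℝ) * ∫ s in Ioc (1:ℝ) (R.g n), R'.g (R.h s) / R.h s) := by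
  have hn1 : (1:ℝ) ≤ (n:ℝ) := by exact_mod_cast hn
  have hgn1 : (1:ℝ) ≤ R.g n := R.g_ge_one hn1
  have hgn1' : (1:ℝ) ≤ R'.g n := R'.g_ge_one hn1
  have hCb : 0 < Cb d β := Cb_pos hd (lt_of_lt_of_le hα hαβ) hβ
  have hK2 : (2:ℝ) ≤ Kc c α := Kc_ge_two c α
  have hK0 : (0:ℝ) < Kc c α := Kc_pos c α
  set Φ : ℝ → ℝ := fun s =>
    (n:ℝ) / max 1 (R.h s) * R'.g (max (min (max 1 (R.h s)) (n:ℝ)) 0) with hΦ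
  have hΦeq : ∀ s, Φ s = (n:ℝ) / max 1 (R.h s) * R'.g (min (max 1 (R.h s)) (n:ℝ)) := by
    intro s
    have h1 : (0:ℝ) ≤ min (max 1 (R.h s)) (n:ℝ) := le_min (by positivity) (by positivity)
    simp only [hΦ]
    rw [max_eq_left h1]
  have hΦmeas : Measurable Φ := by
    apply Measurable.mul
    · exact measurable_const.div (measurable_const.max R.h_meas)
    · exact R'.gc_cont.measurable.comp ((measurable_const.max R.h_meas).min measurable_const)
  have hΦnn : ∀ s, 0 ≤ Φ s := by
    intro s
    rw [hΦeq]
    have h1 : (1:ℝ) ≤ min (max 1 (R.h s)) (n:ℝ) := le_min (le_max_left _ _) hn1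
    have h2 : 0 ≤ R'.g (min (max 1 (R.h s)) (n:ℝ)) := R'.g_nonneg (by linarith)
    have h3 : (0:ℝ) < max 1 (R.h s) := lt_of_lt_of_le one_pos (le_max_left _ _)
    positivity
  have hΦbdd : ∀ s, Φ s ≤ (n:ℝ) * R'.g n := by
    intro s
    rw [hΦeq]
    have h3 : (1:ℝ) ≤ max 1 (R.h s) := le_max_left _ _
    have h1 : (1:ℝ) ≤ min (max 1 (R.h s)) (n:ℝ) := le_min h3 hn1
    have h4 : R'.g (min (max 1 (R.h s)) (n:ℝ)) ≤ R'.g n :=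
      R'.g_monoOn (mem_Ici.mpr (by linarith)) (mem_Ici.mpr (by linarith)) (min_le_right _ _)
    have h5 : (n:ℝ) / max 1 (R.h s) ≤ (n:ℝ) := by
      rw [div_le_iff₀ (by linarith)]; nlinarith
    have h6 : 0 ≤ (n:ℝ) / max 1 (R.h s) := by positivity
    have h7 : 0 ≤ R'.g (min (max 1 (R.h s)) (n:ℝ)) := R'.g_nonneg (by linarith)
    nlinarith
  -- on Ioi (g n), Φ has tail form
  have hΦtail : EqOn Φ (fun s => (n:ℝ) * R'.g n * (1 / R.h s)) (Ioi (R.g n)) := by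
    intro s hs
    have hhs : (n:ℝ) ≤ R.h s := by
      have := R.h_mono (le_of_lt hs)
      rwa [R.h_g (by linarith : (0:ℝ) ≤ (n:ℝ))] at this
    have h1 : max 1 (R.h s) = R.h s := max_eq_right (by linarith)
    have h2 : min (R.h s) (n:ℝ) = (n:ℝ) := min_eq_right hhs
    rw [hΦeq, h1, h2]
    ring
  have hΦint : IntegrableOn Φ (Ioi (0:ℝ)) := by
    rw [← Ioc_union_Ioi_eq_Ioi (by linarith : (0:ℝ) ≤ R.g n)]
    apply IntegrableOn.union
    · apply Measure.integrableOn_of_bounded (M := (n:ℝ) * R'.g n)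
      · rw [Real.volume_Ioc]; exact ENNReal.ofReal_ne_top
      · exact hΦmeas.aestronglyMeasurable
      · exact Filter.Eventually.of_forall fun s => by
          rw [Real.norm_eq_abs, abs_of_nonneg (hΦnn s)]; exact hΦbdd s
    · have h1 : IntegrableOn (fun s => (n:ℝ) * R'.g n * (1 / R.h s)) (Ioi (R.g n)) :=
        (R.tail_integrable hd hα hαβ hβ hn1).const_mul _
      exact h1.congr_fun (fun s hs => (hΦtail hs).symm) measurableSet_Ioi
  -- piece values
  have E0 : (∫ s in Ioc (0:ℝ) 1, Φ s) = (n:ℝ) := by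
    have hcongr : EqOn Φ (fun _ => (n:ℝ)) (Ioc (0:ℝ) 1) := by
      intro s hs
      have h1 : R.h s ≤ 1 := R.h_le_one hs.2
      have h2 : max 1 (R.h s) = 1 := max_eq_left h1
      rw [hΦeq, h2, min_eq_left hn1, R'.g_one]
      simp
    rw [setIntegral_congr_fun measurableSet_Ioc hcongr, setIntegral_const,
      Real.volume_real_Ioc, max_eq_left (by norm_num), smul_eq_mul]
    norm_num
  have E1 : (∫ s in Ioc (1:ℝ) (R.g n), Φ s)
      = (n:ℝ) * ∫ s in Ioc (1:ℝ) (R.g n), R'.g (R.h s) / R.h s := by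
    have hcongr : EqOn Φ (fun s => (n:ℝ) * (R'.g (R.h s) / R.h s)) (Ioc (1:ℝ) (R.g n)) := by
      intro s hs
      have h1 : 1 ≤ R.h s := R.h_ge_one hs.1.le
      have h2 : R.h s ≤ (n:ℝ) := by
        have := R.h_mono hs.2
        rwa [R.h_g (by linarith : (0:ℝ) ≤ (n:ℝ))] at this
      rw [hΦeq, max_eq_right h1, min_eq_left h2]
      ring
    rw [setIntegral_congr_fun measurableSet_Ioc hcongr, MeasureTheory.integral_const_mul]
  have E2eq : (∫ s in Ioi (R.g n), Φ s)
      = (n:ℝ) * R'.g n * ∫ s in Ioi (R.g n), 1 / R.h s := by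
    rw [setIntegral_congr_fun measurableSet_Ioi hΦtail, MeasureTheory.integral_const_mul]
  have E2lb : R.g n * R'.g n / Kc c α ≤ ∫ s in Ioi (R.g n), Φ s := by
    rw [E2eq]
    have h1 := R.tail_ge hc hd hα hαβ hβ hn1
    have h2 : (n:ℝ) * R'.g n * (R.g n / (Kc c α * (n:ℝ)))
        ≤ (n:ℝ) * R'.g n * ∫ s in Ioi (R.g n), 1 / R.h s := by
      apply mul_le_mul_of_nonneg_left h1 (by positivity)
    refine le_trans (le_of_eq ?_) h2
    field_simp
  have E2ub : (∫ s in Ioi (R.g n), Φ s) ≤ Cb d β * (R.g n * R'.g n) := by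
    rw [E2eq]
    have h1 := R.tail_le hd hα hαβ hβ hn1
    have h2 : (n:ℝ) * R'.g n * ∫ s in Ioi (R.g n), 1 / R.h s
        ≤ (n:ℝ) * R'.g n * (Cb d β * (R.g n / (n:ℝ))) := by
      apply mul_le_mul_of_nonneg_left h1 (by positivity)
    refine le_trans h2 (le_of_eq ?_)
    field_simp
  -- splitting
  have hsplit1 : (∫ s in Ioi (0:ℝ), Φ s)
      = (∫ s in Ioc (0:ℝ) (R.g n), Φ s) + ∫ s in Ioi (R.g n), Φ s :=
    integral_Ioi_split (by linarith) hΦint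
  have hsplit2 : (∫ s in Ioc (0:ℝ) (R.g n), Φ s)
      = (∫ s in Ioc (0:ℝ) 1, Φ s) + ∫ s in Ioc (1:ℝ) (R.g n), Φ s := by
    rw [← MeasureTheory.setIntegral_union (Ioc_disjoint_Ioc_of_le le_rfl) measurableSet_Ioc
      (hΦint.mono_set Ioc_subset_Ioi_self)
      (hΦint.mono_set (fun x hx => lt_trans one_pos hx.1)),
      Ioc_union_Ioc_eq_Ioc zero_le_one hgn1]
  set t2 := ∫ s in Ioc (1:ℝ) (R.g n), R'.g (R.h s) / R.h s with ht2
  have hΦtotal_lb : (n:ℝ) + (n:ℝ) * t2 + R.g n * R'.g n / Kc c α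
      ≤ ∫ s in Ioi (0:ℝ), Φ s := by
    rw [hsplit1, hsplit2, E0, E1]
    linarith
  have hΦtotal_ub : (∫ s in Ioi (0:ℝ), Φ s)
      ≤ (n:ℝ) + (n:ℝ) * t2 + Cb d β * (R.g n * R'.g n) := by
    rw [hsplit1, hsplit2, E0, E1]
    linarith
  -- compare with J
  set J := ∫ s in Ioi (0:ℝ), ∫ t in Ioi (0:ℝ),
    min (R.A n s) (min (R'.A n t) (R.A n s * R'.A n t)) with hJ
  have hslice : ∀ s ∈ Ioi (0:ℝ),
      Φ s ≤ (∫ t in Ioi (0:ℝ), min (R.A n s) (min (R'.A n t) (R.A n s * R'.A n t)))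
      ∧ (∫ t in Ioi (0:ℝ), min (R.A n s) (min (R'.A n t) (R.A n s * R'.A n t)))
        ≤ (1 + Cb d β) * Φ s := by
    intro s hs
    have h := R.slice hd hα hαβ hβ R' n hn hs
    have he : R.A n s * R'.g (min (max 1 (R.h s)) (n:ℝ)) = Φ s := by
      rw [hΦeq, R.A_eq hs]
    rw [he] at h
    exact h
  have hJlb : (∫ s in Ioi (0:ℝ), Φ s) ≤ J :=
    setIntegral_mono_on hΦint hJint measurableSet_Ioi fun s hs => (hslice s hs).1
  have hJub : J ≤ (1 + Cb d β) * ∫ s in Ioi (0:ℝ), Φ s := by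
    rw [← MeasureTheory.integral_const_mul]
    exact setIntegral_mono_on hJint (hΦint.const_mul _) measurableSet_Ioi
      fun s hs => (hslice s hs).2
  have ht2nn : 0 ≤ t2 := by
    apply setIntegral_nonneg measurableSet_Ioc
    intro s hs
    have h1 : 1 ≤ R.h s := R.h_ge_one hs.1.le
    have h2 : 0 ≤ R'.g (R.h s) := R'.g_nonneg (by linarith)
    positivity
  have h4 : 0 ≤ (n:ℝ) + (n:ℝ) * t2 := by
    have := mul_nonneg (Nat.cast_nonneg (α := ℝ) n) ht2nn
    have := Nat.cast_nonneg (α := ℝ) n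
    linarith
  constructor
  · have hJ1 : (n:ℝ) + (n:ℝ) * t2 + R.g n * R'.g n / Kc c α ≤ J :=
      le_trans hΦtotal_lb hJlb
    have h5 : ((n:ℝ) + (n:ℝ) * t2) / Kc c α ≤ (n:ℝ) + (n:ℝ) * t2 :=
      div_le_self h4 (by linarith)
    have h6 : (R.g n * R'.g n + (n:ℝ) + (n:ℝ) * t2) / Kc c α
        = R.g n * R'.g n / Kc c α + ((n:ℝ) + (n:ℝ) * t2) / Kc c α := by ring
    rw [h6]
    linarith
  · have hJ2 : J ≤ (1 + Cb d β) * ((n:ℝ) + (n:ℝ) * t2 + Cb d β * (R.g n * R'.g n)) :=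
      le_trans hJub (mul_le_mul_of_nonneg_left hΦtotal_ub (by linarith))
    have key : ∀ A B C : ℝ, 0 < A → 0 ≤ B → 0 ≤ C →
        (1+A) * (C + A*B) ≤ (1+A) * (1+A) * (B + C) := by
      intro A B C hA hB hC
      nlinarith [mul_nonneg hA.le hC, mul_nonneg hA.le hB,
        mul_nonneg (mul_nonneg hA.le hA.le) hC, mul_nonneg (mul_nonneg hA.le hA.le) hB]
    have h5 := key (Cb d β) (R.g n * R'.g n) ((n:ℝ) + (n:ℝ) * t2) hCb
      (mul_nonneg (by linarith) (by linarith)) h4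
    have h6 : R.g n * R'.g n + ((n:ℝ) + (n:ℝ) * t2)
        = R.g n * R'.g n + (n:ℝ) + (n:ℝ) * t2 := by ring
    rw [h6] at h5
    linarith only [hJ2, h5]


lemma t2_meas (R' : RegFun c d α β) :
    Measurable (fun s => R'.g (R.h s) / R.h s) := by
  have he : (fun s => R'.g (R.h s) / R.h s)
      = fun s => R'.g (max (R.h s) 0) / R.h s :=
    funext fun s => by rw [max_eq_left (R.h_nonneg s)]
  rw [he]
  exact (R'.gc_cont.measurable.comp R.h_meas).div R.h_meas

lemma t2_nonneg (R' : RegFun c d α β) {X : ℝ} :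
    0 ≤ ∫ s in Ioc (1:ℝ) X, R'.g (R.h s) / R.h s := by
  apply setIntegral_nonneg measurableSet_Ioc
  intro s hs
  have h1 : 1 ≤ R.h s := R.h_ge_one hs.1.le
  have h2 : 0 ≤ R'.g (R.h s) := R'.g_nonneg (by linarith)
  positivity

lemma t2_integrable (R' : RegFun c d α β) (X : ℝ) :
    IntegrableOn (fun s => R'.g (R.h s) / R.h s) (Ioc (1:ℝ) X) := by
  apply Measure.integrableOn_of_bounded (M := R'.g (max 1 (R.h X)))
  · rw [Real.volume_Ioc]; exact ENNReal.ofReal_ne_top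
  · exact (R.t2_meas R').aestronglyMeasurable
  · rw [ae_restrict_iff' measurableSet_Ioc]
    refine Filter.Eventually.of_forall fun s hs => ?_
    have h1 : 1 ≤ R.h s := R.h_ge_one hs.1.le
    have h2 : R.h s ≤ max 1 (R.h X) := le_max_of_le_right (R.h_mono hs.2)
    have h3 : R'.g (R.h s) ≤ R'.g (max 1 (R.h X)) :=
      R'.g_monoOn (mem_Ici.mpr (by linarith)) (mem_Ici.mpr (by linarith)) h2
    have h4 : 0 ≤ R'.g (R.h s) := R'.g_nonneg (by linarith)
    rw [Real.norm_eq_abs, abs_of_nonneg (by positivity)]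
    calc R'.g (R.h s) / R.h s ≤ R'.g (R.h s) / 1 :=
          div_le_div_of_nonneg_left h4 one_pos h1
      _ = R'.g (R.h s) := div_one _
      _ ≤ R'.g (max 1 (R.h X)) := h3

include hc hα in
lemma n_le (R' : RegFun c d α β) (n : ℕ) (hn : 1 ≤ n) :
    (n:ℝ) ≤ Kc c α * (R.g n * R'.g n
      + (n:ℝ) * ∫ s in Ioc (1:ℝ) (R.g n), R'.g (R.h s) / R.h s) := by
  have hn1 : (1:ℝ) ≤ (n:ℝ) := by exact_mod_cast hn
  have hgn1 : (1:ℝ) ≤ R.g n := R.g_ge_one hn1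
  have hgn1' : (1:ℝ) ≤ R'.g n := R'.g_ge_one hn1
  have hK2 : (2:ℝ) ≤ Kc c α := Kc_ge_two c α
  have hK0 : (0:ℝ) < Kc c α := Kc_pos c α
  set t2 := ∫ s in Ioc (1:ℝ) (R.g n), R'.g (R.h s) / R.h s with ht2
  have ht2nn : 0 ≤ t2 := R.t2_nonneg R'
  have hgg : (1:ℝ) ≤ R.g n * R'.g n := by nlinarith
  rcases le_or_gt 2 (R.g n) with h2 | h2
  · -- g n ≥ 2 : use the integral over (1,2]
    have hsub : Ioc (1:ℝ) 2 ⊆ Ioc (1:ℝ) (R.g n) := Ioc_subset_Ioc_right h2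
    have hlow : ∀ s ∈ Ioc (1:ℝ) 2, 1 / Kc c α ≤ R'.g (R.h s) / R.h s := by
      intro s hs
      have h1 : 1 ≤ R.h s := R.h_ge_one hs.1.le
      have hs2 : R.h s ≤ (2/c) ^ (1/α) :=
        le_trans (R.h_mono hs.2) (R.h_le_pow hc hα (by norm_num))
      have hsK : R.h s ≤ Kc c α := le_trans hs2 (le_max_right _ _)
      have hg1 : 1 ≤ R'.g (R.h s) := R'.g_ge_one h1
      exact div_le_div₀ (by linarith) hg1 (by linarith) hsK
    have hstep1 : (1:ℝ) / Kc c α ≤ ∫ s in Ioc (1:ℝ) 2, R'.g (R.h s) / R.h s := by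
      have := setIntegral_mono_on
        (integrableOn_const measure_Ioc_lt_top.ne)
        ((R.t2_integrable R' (R.g n)).mono_set hsub) measurableSet_Ioc hlow
      rw [setIntegral_const, Real.volume_real_Ioc,
        max_eq_left (by norm_num), smul_eq_mul] at this
      calc (1:ℝ)/Kc c α = (2 - 1) * (1/Kc c α) := by ring
        _ ≤ _ := this
    have hstep2 : (∫ s in Ioc (1:ℝ) 2, R'.g (R.h s) / R.h s) ≤ t2 := by
      apply setIntegral_mono_set (R.t2_integrable R' (R.g n))
      · refine Filter.Eventually.of_forall fun s => ?_
        exact div_nonneg (R'.g_nonneg (R.h_nonneg s)) (R.h_nonneg s)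
      · exact HasSubset.Subset.eventuallyLE hsub
    have hT : 1 / Kc c α ≤ t2 := le_trans hstep1 hstep2
    have h6 : (n:ℝ)/Kc c α ≤ (n:ℝ) * t2 := by
      rw [div_eq_mul_one_div]
      exact mul_le_mul_of_nonneg_left hT (Nat.cast_nonneg n)
    calc (n:ℝ) = Kc c α * ((n:ℝ)/Kc c α) := by field_simp
      _ ≤ Kc c α * ((n:ℝ) * t2) := mul_le_mul_of_nonneg_left h6 hK0.le
      _ ≤ Kc c α * (R.g n * R'.g n + (n:ℝ) * t2) := by
          apply mul_le_mul_of_nonneg_left _ hK0.le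
          nlinarith
  · -- g n < 2 : n is bounded by Kc
    have hreg := R.reg_low (le_refl 1) hn1
    rw [div_one, R.g_one, mul_one] at hreg
    have hna : (n:ℝ) ^ α < 2 / c := by
      rw [lt_div_iff₀ hc]
      nlinarith [Real.rpow_nonneg (by positivity : (0:ℝ) ≤ (n:ℝ)) α]
    have hnK : (n:ℝ) ≤ Kc c α := by
      have h3 : ((n:ℝ) ^ α) ^ (1/α) ≤ (2/c) ^ (1/α) :=
        Real.rpow_le_rpow (Real.rpow_nonneg (by positivity) _) hna.le (by positivity)
      rw [← Real.rpow_mul (by positivity : (0:ℝ) ≤ (n:ℝ)), mul_one_div,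
        div_self hα.ne', Real.rpow_one] at h3
      exact le_trans h3 (le_max_right _ _)
    calc (n:ℝ) ≤ Kc c α := hnK
      _ = Kc c α * 1 := (mul_one _).symm
      _ ≤ Kc c α * (R.g n * R'.g n + (n:ℝ) * t2) := by
          apply mul_le_mul_of_nonneg_left _ hK0.le
          nlinarith [mul_nonneg (Nat.cast_nonneg (α := ℝ) n) ht2nn]

end Slice

end RegFun

lemma min_sym (a b : ℝ) : min a (min b (a * b)) = min b (min a (b * a)) := by
  rw [mul_comm a b, ← min_assoc, min_comm a b, min_assoc]

end Stmt19

open Stmt19 Stmt19.RegFun in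
/-- The two-dimensional integral estimate (4.8)-(4.9) from the proof of
Theorem 0.4: for increasing continuous bijections `g₁, g₂` of `[0,∞)` with
`gᵢ(1) = 1` satisfying the two-sided regularity condition, and
`wᵢ(t) = min(1, 1/gᵢ⁻¹(t))`, the integral
`∫∫ min(n w₁(s), n w₂(t), n² w₁(s) w₂(t)) ds dt` is comparable to
`S_n = g₁(n)g₂(n) + n∫_1^{g₁(n)} g₂(g₁⁻¹(s))/g₁⁻¹(s) ds
     + n∫_1^{g₂(n)} g₁(g₂⁻¹(t))/g₂⁻¹(t) dt`,
with constants depending only on the regularity constants. -/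
theorem stmt_19 (c d α β : ℝ)
    (hc : 0 < c) (hd : 0 < d) (hα : 0 < α) (hαβ : α ≤ β) (hβ : β < 1) :
    ∃ C₁ C₂ : ℝ, 0 < C₁ ∧ 0 < C₂ ∧
      ∀ g₁ g₂ ginv₁ ginv₂ w₁ w₂ : ℝ → ℝ,
        StrictMonoOn g₁ (Ici 0) → ContinuousOn g₁ (Ici 0) →
        BijOn g₁ (Ici 0) (Ici 0) → g₁ 1 = 1 →
        StrictMonoOn g₂ (Ici 0) → ContinuousOn g₂ (Ici 0) →
        BijOn g₂ (Ici 0) (Ici 0) → g₂ 1 = 1 →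
        (∀ x ∈ Ici (0:ℝ), ginv₁ (g₁ x) = x) →
        (∀ y ∈ Ici (0:ℝ), ginv₁ y ∈ Ici (0:ℝ) ∧ g₁ (ginv₁ y) = y) →
        (∀ x ∈ Ici (0:ℝ), ginv₂ (g₂ x) = x) →
        (∀ y ∈ Ici (0:ℝ), ginv₂ y ∈ Ici (0:ℝ) ∧ g₂ (ginv₂ y) = y) →
        (∀ x y : ℝ, 1 ≤ x → x ≤ y →
          c * (y / x) ^ α ≤ g₁ y / g₁ x ∧ g₁ y / g₁ x ≤ d * (y / x) ^ β) →
        (∀ x y : ℝ, 1 ≤ x → x ≤ y →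
          c * (y / x) ^ α ≤ g₂ y / g₂ x ∧ g₂ y / g₂ x ≤ d * (y / x) ^ β) →
        (∀ t : ℝ, 0 < t → w₁ t = min 1 (1 / ginv₁ t)) →
        (∀ t : ℝ, 0 < t → w₂ t = min 1 (1 / ginv₂ t)) →
        ∀ n : ℕ, 1 ≤ n → ∀ I S : ℝ,
          I = (∫ s in Ioi (0:ℝ), ∫ t in Ioi (0:ℝ),
                min ((n : ℝ) * w₁ s) (min ((n : ℝ) * w₂ t)
                  ((n : ℝ) ^ 2 * (w₁ s * w₂ t)))) →
          S = g₁ (n : ℝ) * g₂ (n : ℝ)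
              + (n : ℝ) * (∫ s in (1:ℝ)..(g₁ (n : ℝ)), g₂ (ginv₁ s) / ginv₁ s)
              + (n : ℝ) * (∫ t in (1:ℝ)..(g₂ (n : ℝ)), g₁ (ginv₂ t) / ginv₂ t) →
          C₁ * S ≤ I ∧ I ≤ C₂ * S := by
  have hβ0 : 0 < β := lt_of_lt_of_le hα hαβ
  have hK0 : (0:ℝ) < Kc c α := Kc_pos c α
  have hK2 : (2:ℝ) ≤ Kc c α := Kc_ge_two c α
  have hCb : 0 < Cb d β := Cb_pos hd hβ0 hβ
  set K := Kc c α with hK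
  set q := (1 + Cb d β) * (1 + Cb d β) with hq
  have hq0 : 0 < q := by positivity
  refine ⟨1 / (2 * K), q * (1 + K), by positivity, by positivity, ?_⟩
  intro g₁ g₂ ginv₁ ginv₂ w₁ w₂ m₁ c₁ b₁ o₁ m₂ c₂ b₂ o₂ li₁ ri₁ li₂ ri₂ r₁ r₂
    hw₁ hw₂ n hn I S hI hS
  set R₁ : RegFun c d α β := ⟨g₁, ginv₁, m₁, c₁, b₁, o₁, li₁, ri₁, r₁⟩ with hR₁
  set R₂ : RegFun c d α β := ⟨g₂, ginv₂, m₂, c₂, b₂, o₂, li₂, ri₂, r₂⟩ with hR₂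
  have hn1 : (1:ℝ) ≤ (n:ℝ) := by exact_mod_cast hn
  have hgn1 : (1:ℝ) ≤ R₁.g n := R₁.g_ge_one hn1
  have hgn2 : (1:ℝ) ≤ R₂.g n := R₂.g_ge_one hn1
  -- rewrite I as an iterated integral of the A-form
  have hIeq : I = ∫ s in Ioi (0:ℝ), ∫ t in Ioi (0:ℝ),
      min (R₁.A n s) (min (R₂.A n t) (R₁.A n s * R₂.A n t)) := by
    rw [hI]
    refine setIntegral_congr_fun measurableSet_Ioi fun s hs => ?_
    refine setIntegral_congr_fun measurableSet_Ioi fun t ht => ?_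
    have e1 : (n:ℝ) * w₁ s = R₁.A n s := by
      rw [hw₁ s hs, RegFun.A, R₁.h_of_pos hs]
    have e2 : (n:ℝ) * w₂ t = R₂.A n t := by
      rw [hw₂ t ht, RegFun.A, R₂.h_of_pos ht]
    have e3 : (n:ℝ) ^ 2 * (w₁ s * w₂ t) = R₁.A n s * R₂.A n t := by
      rw [← e1, ← e2]; ring
    rw [e1, e2, e3]
  -- integrability on the product space
  have hFmeas : Measurable (fun p : ℝ × ℝ =>
      min (R₁.A n p.1) (min (R₂.A n p.2) (R₁.A n p.1 * R₂.A n p.2))) := by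
    exact ((R₁.A_meas n).comp measurable_fst).min
      (((R₂.A_meas n).comp measurable_snd).min
        (((R₁.A_meas n).comp measurable_fst).mul ((R₂.A_meas n).comp measurable_snd)))
  have hFprod : Integrable (fun p : ℝ × ℝ =>
      min (R₁.A n p.1) (min (R₂.A n p.2) (R₁.A n p.1 * R₂.A n p.2)))
      ((volume.restrict (Ioi (0:ℝ))).prod (volume.restrict (Ioi (0:ℝ)))) := by
    apply Integrable.mono'
      (Integrable.mul_prod (R₁.A_int hd hα hαβ hβ n) (R₂.A_int hd hα hαβ hβ n))
      hFmeas.aestronglyMeasurable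
    refine Filter.Eventually.of_forall fun p => ?_
    have h1 : 0 ≤ min (R₁.A n p.1) (min (R₂.A n p.2) (R₁.A n p.1 * R₂.A n p.2)) :=
      le_min (R₁.A_nonneg n p.1) (le_min (R₂.A_nonneg n p.2)
        (mul_nonneg (R₁.A_nonneg n p.1) (R₂.A_nonneg n p.2)))
    rw [Real.norm_eq_abs, abs_of_nonneg h1]
    exact le_trans (min_le_right _ _) (min_le_right _ _)
  have hFmeas2 : Measurable (fun p : ℝ × ℝ =>
      min (R₂.A n p.1) (min (R₁.A n p.2) (R₂.A n p.1 * R₁.A n p.2))) := by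
    exact ((R₂.A_meas n).comp measurable_fst).min
      (((R₁.A_meas n).comp measurable_snd).min
        (((R₂.A_meas n).comp measurable_fst).mul ((R₁.A_meas n).comp measurable_snd)))
  have hFprod2 : Integrable (fun p : ℝ × ℝ =>
      min (R₂.A n p.1) (min (R₁.A n p.2) (R₂.A n p.1 * R₁.A n p.2)))
      ((volume.restrict (Ioi (0:ℝ))).prod (volume.restrict (Ioi (0:ℝ)))) := by
    apply Integrable.mono'
      (Integrable.mul_prod (R₂.A_int hd hα hαβ hβ n) (R₁.A_int hd hα hαβ hβ n))
      hFmeas2.aestronglyMeasurable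
    refine Filter.Eventually.of_forall fun p => ?_
    have h1 : 0 ≤ min (R₂.A n p.1) (min (R₁.A n p.2) (R₂.A n p.1 * R₁.A n p.2)) :=
      le_min (R₂.A_nonneg n p.1) (le_min (R₁.A_nonneg n p.2)
        (mul_nonneg (R₂.A_nonneg n p.1) (R₁.A_nonneg n p.2)))
    rw [Real.norm_eq_abs, abs_of_nonneg h1]
    exact le_trans (min_le_right _ _) (min_le_right _ _)
  have hJ1int : IntegrableOn (fun s => ∫ t in Ioi (0:ℝ),
      min (R₁.A n s) (min (R₂.A n t) (R₁.A n s * R₂.A n t))) (Ioi (0:ℝ)) := by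
    exact hFprod.integral_prod_left
  have hJ2int : IntegrableOn (fun t => ∫ s in Ioi (0:ℝ),
      min (R₂.A n t) (min (R₁.A n s) (R₂.A n t * R₁.A n s))) (Ioi (0:ℝ)) := by
    exact hFprod2.integral_prod_left
  obtain ⟨hlb1, hub1⟩ := R₁.core hc hd hα hαβ hβ R₂ n hn hJ1int
  obtain ⟨hlb2, hub2⟩ := R₂.core hc hd hα hαβ hβ R₁ n hn hJ2int
  -- Fubini
  have hswap : (∫ s in Ioi (0:ℝ), ∫ t in Ioi (0:ℝ),
        min (R₁.A n s) (min (R₂.A n t) (R₁.A n s * R₂.A n t)))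
      = ∫ t in Ioi (0:ℝ), ∫ s in Ioi (0:ℝ),
        min (R₂.A n t) (min (R₁.A n s) (R₂.A n t * R₁.A n s)) := by
    rw [MeasureTheory.integral_integral_swap hFprod]
    refine setIntegral_congr_fun measurableSet_Ioi fun t _ => ?_
    refine setIntegral_congr_fun measurableSet_Ioi fun s _ => ?_
    exact min_sym _ _
  set t2 := ∫ s in Ioc (1:ℝ) (R₁.g n), R₂.g (R₁.h s) / R₁.h s with ht2
  set t3 := ∫ t in Ioc (1:ℝ) (R₂.g n), R₁.g (R₂.h t) / R₂.h t with ht3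
  have ht2nn : 0 ≤ t2 := R₁.t2_nonneg R₂
  have ht3nn : 0 ≤ t3 := R₂.t2_nonneg R₁
  have hnle : (n:ℝ) ≤ K * (R₁.g n * R₂.g n + (n:ℝ) * t2) := R₁.n_le hc hα R₂ n hn
  -- rewrite S
  have hSeq : S = R₁.g n * R₂.g n + (n:ℝ) * t2 + (n:ℝ) * t3 := by
    rw [hS]
    have hT2 : (∫ s in (1:ℝ)..(g₁ (n:ℝ)), g₂ (ginv₁ s) / ginv₁ s) = t2 := by
      rw [intervalIntegral.integral_of_le hgn1, ht2]
      refine setIntegral_congr_fun measurableSet_Ioc fun s hs => ?_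
      rw [R₁.h_of_pos (lt_trans one_pos hs.1)]
    have hT3 : (∫ t in (1:ℝ)..(g₂ (n:ℝ)), g₁ (ginv₂ t) / ginv₂ t) = t3 := by
      rw [intervalIntegral.integral_of_le hgn2, ht3]
      refine setIntegral_congr_fun measurableSet_Ioc fun t ht => ?_
      rw [R₂.h_of_pos (lt_trans one_pos ht.1)]
    rw [hT2, hT3]
  set J := ∫ s in Ioi (0:ℝ), ∫ t in Ioi (0:ℝ),
    min (R₁.A n s) (min (R₂.A n t) (R₁.A n s * R₂.A n t)) with hJdef
  rw [← hswap] at hlb2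
  -- combine
  have hP1 : R₁.g n * R₂.g n + (n:ℝ) + (n:ℝ) * t2 ≤ K * J := by
    rw [← div_le_iff₀' hK0]; exact hlb1
  have hP2 : R₂.g n * R₁.g n + (n:ℝ) + (n:ℝ) * t3 ≤ K * J := by
    rw [← div_le_iff₀' hK0]; exact hlb2
  rw [mul_comm (R₂.g (n:ℝ)) (R₁.g (n:ℝ))] at hP2
  have hgg0 : (0:ℝ) ≤ R₁.g n * R₂.g n := mul_nonneg (by linarith) (by linarith)
  constructor
  · rw [hIeq, hSeq]
    have hS2 : R₁.g n * R₂.g n + (n:ℝ) * t2 + (n:ℝ) * t3 ≤ 2 * K * J := by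
      linarith [hP1, hP2, Nat.cast_nonneg (α := ℝ) n]
    calc 1 / (2*K) * (R₁.g n * R₂.g n + (n:ℝ) * t2 + (n:ℝ) * t3)
        ≤ 1 / (2*K) * (2 * K * J) := by
          apply mul_le_mul_of_nonneg_left hS2 (by positivity)
      _ = J := by field_simp
  · rw [hIeq, hSeq]
    have hP1ub : R₁.g n * R₂.g n + (n:ℝ) + (n:ℝ) * t2
        ≤ (1 + K) * (R₁.g n * R₂.g n + (n:ℝ) * t2 + (n:ℝ) * t3) := by
      have hnt3 : 0 ≤ (n:ℝ) * t3 := mul_nonneg (by positivity) ht3nn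
      have hnt2 : 0 ≤ (n:ℝ) * t2 := mul_nonneg (by positivity) ht2nn
      nlinarith [hnle, mul_nonneg hK0.le hnt3, mul_nonneg hK0.le hnt2,
        mul_nonneg hK0.le hgg0]
    calc J ≤ q * (R₁.g n * R₂.g n + (n:ℝ) + (n:ℝ) * t2) := hub1
      _ ≤ q * ((1 + K) * (R₁.g n * R₂.g n + (n:ℝ) * t2 + (n:ℝ) * t3)) :=
          mul_le_mul_of_nonneg_left hP1ub hq0.le
      _ = q * (1 + K) * (R₁.g n * R₂.g n + (n:ℝ) * t2 + (n:ℝ) * t3) := by ring
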